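/- Let b, Δ, Δ̄ ∈ ℂ with b ≠ 0 and Δ̄ ≠ 0, and let g be a nonzero homogeneous polynomial of total degree 2 in two variables over ℂ. Then −(bλ+μ)·g(∂,λ+μ) = (∂+Δ̄λ)·g(∂+λ,μ) − (∂+μ+Δλ)·g(∂,μ) holds for all ∂, λ, μ ∈ ℂ if and only if Δ = 1, Δ̄ = −1−b, and there exists a nonzero c ∈ ℂ with g(∂,λ) = c·(∂² − ((1+2Δ̄)/b)·∂λ − (Δ̄/b)·λ²). -/

import Mathlib

/-- Evaluation of a two-variable polynomial at a pair of complex numbers. -/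
noncomputable def ev2 (p : MvPolynomial (Fin 2) ℂ) (x y : ℂ) : ℂ :=
  MvPolynomial.eval ![x, y] p


/-- degree of a Fin 2 finsupp -/
lemma deg2 (d : Fin 2 →₀ ℕ) : Finsupp.degree d = d 0 + d 1 := by
  rw [Finsupp.degree_apply, Finset.sum_subset (Finset.subset_univ d.support)]
  · exact Fin.sum_univ_two d
  · intro i _ hi
    exact Finsupp.notMem_support_iff.mp hi

lemma classify (d : Fin 2 →₀ ℕ) (h : d 0 + d 1 = 2) :
    d = Finsupp.single 0 2 ∨ d = Finsupp.single 0 1 + Finsupp.single 1 1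
      ∨ d = Finsupp.single 1 2 := by
  have hrep : d = Finsupp.single 0 (d 0) + Finsupp.single 1 (d 1) := by
    ext i; fin_cases i <;> simp
  have h0 : d 0 ≤ 2 := by omega
  interval_cases h0' : (d 0)
  · right; right
    have h1 : d 1 = 2 := by omega
    rw [hrep, h1]; simp
  · right; left
    have h1 : d 1 = 1 := by omega
    rw [hrep, h1]
  · left
    have h1 : d 1 = 0 := by omega
    rw [hrep, h1]; simp

lemma ev2_eq (g : MvPolynomial (Fin 2) ℂ) (hhom : g.IsHomogeneous 2) (x y : ℂ) :
    ev2 g x y = g.coeff (Finsupp.single 0 2) * x ^ 2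
      + g.coeff (Finsupp.single 0 1 + Finsupp.single 1 1) * (x * y)
      + g.coeff (Finsupp.single 1 2) * y ^ 2 := by
  have hne1 : (Finsupp.single 0 2 : Fin 2 →₀ ℕ) ≠ Finsupp.single 0 1 + Finsupp.single 1 1 := by
    intro h; have := DFunLike.congr_fun h 0; simp at this
  have hne2 : (Finsupp.single 0 2 : Fin 2 →₀ ℕ) ≠ Finsupp.single 1 2 := by
    intro h; have := DFunLike.congr_fun h 0; simp at this
  have hne3 : (Finsupp.single 0 1 + Finsupp.single 1 1 : Fin 2 →₀ ℕ) ≠ Finsupp.single 1 2 := by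
    intro h; have := DFunLike.congr_fun h 0; simp at this
  have hsub : g.support ⊆
      ({Finsupp.single 0 2, Finsupp.single 0 1 + Finsupp.single 1 1, Finsupp.single 1 2} :
        Finset (Fin 2 →₀ ℕ)) := by
    intro d hd
    have hdeg : Finsupp.degree d = 2 := by
      by_contra hne
      exact MvPolynomial.mem_support_iff.mp hd (hhom.coeff_eq_zero hne)
    rw [deg2] at hdeg
    rcases classify d hdeg with h | h | h <;> simp [h]
  rw [ev2, MvPolynomial.eval_eq']
  rw [Finset.sum_subset hsub ?_]
  · rw [Finset.sum_insert (by simp [hne1, hne2]), Finset.sum_insert (by simp [hne3]),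
      Finset.sum_singleton]
    simp [Fin.prod_univ_two, Finsupp.single_apply]
    ring
  · intro d _ hd
    rw [MvPolynomial.notMem_support_iff.mp hd, zero_mul]

lemma g_ne (g : MvPolynomial (Fin 2) ℂ) (hg0 : g ≠ 0) (hhom : g.IsHomogeneous 2) :
    ¬(g.coeff (Finsupp.single 0 2) = 0
      ∧ g.coeff (Finsupp.single 0 1 + Finsupp.single 1 1) = 0
      ∧ g.coeff (Finsupp.single 1 2) = 0) := by
  rintro ⟨hA, hB, hC⟩
  apply hg0
  ext d
  rw [MvPolynomial.coeff_zero]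
  by_cases hdeg : Finsupp.degree d = 2
  · rw [deg2] at hdeg
    rcases classify d hdeg with h | h | h <;> rw [h] <;> assumption
  · exact hhom.coeff_eq_zero hdeg

/-- Degree `m = 2` case: for `b ≠ 0` and `Δ̄ ≠ 0`, a nonzero homogeneous polynomial `g` of
total degree `2` satisfies the H-cocycle equation (F) if and only if `Δ = 1`, `Δ̄ = −1−b`,
and `g(∂,λ) = c·(∂² − ((1+2Δ̄)/b)·∂λ − (Δ̄/b)·λ²)` for some nonzero constant `c`.
Here `Δ'` stands for `Δ̄`. -/
theorem stmt_14 (b Δ Δ' : ℂ) (hb : b ≠ 0) (hΔ' : Δ' ≠ 0)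
    (g : MvPolynomial (Fin 2) ℂ) (hg0 : g ≠ 0) (hhom : g.IsHomogeneous 2) :
    (∀ pa lam mu : ℂ,
      -(b * lam + mu) * ev2 g pa (lam + mu)
        = (pa + Δ' * lam) * ev2 g (pa + lam) mu - (pa + mu + Δ * lam) * ev2 g pa mu) ↔
    (Δ = 1 ∧ Δ' = -1 - b ∧ ∃ c : ℂ, c ≠ 0 ∧
      ∀ pa lam : ℂ,
        ev2 g pa lam = c * (pa ^ 2 - (1 + 2 * Δ') / b * (pa * lam) - Δ' / b * lam ^ 2)) := by
  set A := g.coeff (Finsupp.single 0 2) with hA_def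
  set B := g.coeff (Finsupp.single 0 1 + Finsupp.single 1 1) with hB_def
  set C := g.coeff (Finsupp.single 1 2) with hC_def
  have key : ∀ x y : ℂ, ev2 g x y = A * x ^ 2 + B * (x * y) + C * y ^ 2 := ev2_eq g hhom
  have hnz := g_ne g hg0 hhom
  constructor
  · intro H
    have h1 := H 0 1 0
    have h2 := H 1 1 0
    have h3 := H 2 1 0
    have h4 := H 0 1 1
    have h5 := H 0 1 (-1)
    have h6 := H 1 1 1
    simp only [key] at h1 h2 h3 h4 h5 h6
    have E2 : -(2 * C * b) - C - B * Δ' = 0 := by linear_combination (1/2) * h4 - (1/2) * h5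
    have E3 : -(C * b) - A * Δ' = 0 := by linear_combination h1
    have E5 : -(B * b) - A - 2 * A * Δ' = 0 := by
      linear_combination 2 * h2 - (3/2) * h1 - (1/2) * h3
    have E6 : A * (Δ - Δ' - b - 2) = 0 := by
      linear_combination (1/2) * h3 + (1/2) * h1 - h2
    have hA : A ≠ 0 := by
      intro h0
      apply hnz
      refine ⟨h0, ?_, ?_⟩
      · have hBb : B * b = 0 := by linear_combination (-1) * E5 - (1 + 2 * Δ') * h0
        exact (mul_eq_zero.mp hBb).resolve_right hb
      · have hCb : C * b = 0 := by linear_combination (-1) * E3 - Δ' * h0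
        exact (mul_eq_zero.mp hCb).resolve_right hb
    have hEb : Δ' = -1 - b := by
      have key2 : (2 * A * Δ') * (b + 1 + Δ') = 0 := by
        linear_combination b * E2 - (2 * b + 1) * E3 - Δ' * E5
      have h7 := (mul_eq_zero.mp key2).resolve_left
        (mul_ne_zero (mul_ne_zero two_ne_zero hA) hΔ')
      linear_combination h7
    have hD : Δ = 1 := by
      have h8 : A * (Δ - 1) = 0 := by linear_combination E6 + A * hEb
      have := (mul_eq_zero.mp h8).resolve_left hA
      linear_combination this
    refine ⟨hD, hEb, A, hA, ?_⟩
    intro pa lam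
    rw [key]
    field_simp
    linear_combination (-(pa * lam)) * E5 - lam ^ 2 * E3
  · rintro ⟨hD, hE, c, hc, hf⟩
    intro pa lam mu
    rw [hf, hf, hf, hD, hE]
    field_simp
    ring
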